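/- Let Z be a Dedekind domain with fraction field Q. Let P_1(t),…,P_ℓ(t) ∈ Z[t] be ℓ ≥ 2 nonzero polynomials in one variable t that are coprime in Q[t] and satisfy: (AV) no non-unit of Z divides all the values P_1(z),…,P_ℓ(z) for all z ∈ Z. Then there exists an element m ∈ Z such that P_1(m),…,P_ℓ(m) are coprime in Z. -/

import Mathlib

open Polynomial UniqueFactorizationMonoid in
private lemma aux_dvd_of_pow_mem
    (Z : Type*) [CommRing Z] [IsDomain Z] [IsDedekindDomain Z]
    (d x : Z) (hd : d ≠ 0) (hx : x ≠ 0)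
    (H : ∀ q : Ideal Z, Prime q → ∀ n : ℕ, d ∈ q ^ n → x ∈ q ^ n) :
    d ∣ x := by
  classical
  rw [← Ideal.span_singleton_le_span_singleton, ← Ideal.dvd_iff_le]
  have hd' : Ideal.span {d} ≠ 0 := by simpa using hd
  have hx' : Ideal.span {x} ≠ 0 := by simpa using hx
  rw [dvd_iff_normalizedFactors_le_normalizedFactors hd' hx', Multiset.le_iff_count]
  intro q
  by_cases hq : q ∈ normalizedFactors (Ideal.span {d})
  swap
  · simp [Multiset.count_eq_zero_of_notMem hq]
  have hqprime : Prime q := prime_of_normalized_factor q hq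
  set n := Multiset.count q (normalizedFactors (Ideal.span {d})) with hn
  have h1 : q ^ n ∣ Ideal.span {d} := by
    apply pow_dvd_iff_le_emultiplicity.mpr
    rw [emultiplicity_eq_count_normalizedFactors hqprime.irreducible hd', normalize_eq q]
  have hdmem : d ∈ q ^ n := by
    rw [Ideal.dvd_iff_le] at h1
    exact h1 (Ideal.subset_span rfl)
  have hxmem := H q hqprime n hdmem
  have h2 : q ^ n ∣ Ideal.span {x} := by
    rw [Ideal.dvd_iff_le, Ideal.span_le]
    simpa using hxmem
  have h3 := le_emultiplicity_iff_replicate_le_normalizedFactors hqprime.irreducible hx' |>.mp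
    (pow_dvd_iff_le_emultiplicity.mp h2)
  rw [normalize_eq q] at h3
  calc n = Multiset.count q (Multiset.replicate n q) := by simp
    _ ≤ _ := Multiset.count_le_of_le q h3

open Polynomial in
private lemma aux_min_exponent
    (Z : Type*) [CommRing Z] [IsDomain Z] [IsDedekindDomain Z]
    (ℓ : ℕ) (P : Fin ℓ → Polynomial Z) (r : Z) (hrne : r ≠ 0)
    (hval : ∀ (z : Z) (J : Ideal Z), (∀ i, (P i).eval z ∈ J) → r ∈ J)
    (𝔭 : Ideal Z) (hm : 𝔭.IsMaximal) :
    ∃ (e : ℕ) (z : Z) (i₀ : Fin ℓ), (P i₀).eval z ∉ 𝔭 ^ (e + 1) ∧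
      ∀ (w : Z) (i : Fin ℓ), (P i).eval w ∈ 𝔭 ^ e := by
  classical
  have hKrull : (⨅ n : ℕ, 𝔭 ^ n) = ⊥ := Ideal.iInf_pow_eq_bot_of_isDomain 𝔭 hm.ne_top
  set A : Set ℕ := {n | ∃ (z : Z) (i : Fin ℓ), (P i).eval z ∉ 𝔭 ^ (n + 1)} with hA
  have hAne : A.Nonempty := by
    by_contra hemp
    rw [Set.not_nonempty_iff_eq_empty, Set.eq_empty_iff_forall_notMem] at hemp
    simp only [hA, Set.mem_setOf_eq, not_exists, not_not] at hemp
    have : r ∈ (⨅ n : ℕ, 𝔭 ^ n) := by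
      rw [Ideal.mem_iInf]
      intro n
      have : r ∈ 𝔭 ^ (n + 1) := hval 0 _ (fun i => hemp n 0 i)
      exact Ideal.pow_le_pow_right (Nat.le_succ n) this
    rw [hKrull] at this
    exact hrne this
  set e := sInf A with he
  obtain ⟨z, i₀, hz⟩ := Nat.sInf_mem hAne
  refine ⟨e, z, i₀, hz, ?_⟩
  intro w i
  rcases Nat.eq_zero_or_pos e with h0 | hpos
  · rw [h0, pow_zero, Ideal.one_eq_top]; exact Submodule.mem_top
  · have hne : e - 1 ∉ A := Nat.notMem_of_lt_sInf (by omega)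
    simp only [hA, Set.mem_setOf_eq, not_exists, not_not] at hne
    have := hne w i
    rwa [Nat.sub_add_cancel hpos] at this

open Polynomial in
private lemma aux_bezout
    (Z : Type*) [CommRing Z] [IsDomain Z] [IsDedekindDomain Z]
    (ℓ : ℕ) (P : Fin ℓ → Polynomial Z)
    (hcop : ∀ d : Polynomial (FractionRing Z),
      (∀ i, d ∣ (P i).map (algebraMap Z (FractionRing Z))) → IsUnit d) :
    ∃ (V : Fin ℓ → Polynomial Z) (r : Z), r ≠ 0 ∧ ∑ i, V i * P i = C r := by
  classical
  set Q := FractionRing Z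
  set f := algebraMap Z Q with hfdef
  have hfi : Function.Injective f := IsFractionRing.injective Z Q
  set I : Ideal (Polynomial Q) := Ideal.span (Set.range fun i => (P i).map f) with hI
  obtain ⟨g, hg⟩ := (IsPrincipalIdealRing.principal I).principal
  have hgu : IsUnit g := by
    refine hcop g fun i => ?_
    have : (P i).map f ∈ I := Ideal.subset_span ⟨i, rfl⟩
    rw [hg, Ideal.submodule_span_eq, Ideal.mem_span_singleton] at this
    exact this
  have hItop : I = ⊤ := by
    rw [hg, Ideal.submodule_span_eq, Ideal.span_singleton_eq_top]; exact hgu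
  have h1 : (1 : Polynomial Q) ∈ I := hItop ▸ Submodule.mem_top
  rw [hI, Ideal.mem_span_range_iff_exists_fun] at h1
  obtain ⟨c, hc⟩ := h1
  have hspec := fun i => IsLocalization.integerNormalization_map_to_map (nonZeroDivisors Z) (c i)
  choose b hb using hspec
  set W : Fin ℓ → Polynomial Z :=
    fun i => IsLocalization.integerNormalization (nonZeroDivisors Z) (c i)
  set r : Z := ∏ i, (b i : Z) with hr
  have hrne : r ≠ 0 := by
    rw [hr]
    exact Finset.prod_ne_zero_iff.mpr fun i _ => nonZeroDivisors.coe_ne_zero (b i)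
  refine ⟨fun i => C (∏ j ∈ Finset.univ.erase i, (b j : Z)) * W i, r, hrne, ?_⟩
  apply Polynomial.map_injective f hfi
  have hsm : ∀ i, ((b i : Z) • c i) = C (f (b i : Z)) * c i := by
    intro i; ext n
    simp [Polynomial.coeff_smul, Polynomial.coeff_C_mul, Algebra.smul_def, hfdef]
  calc (∑ i, C (∏ j ∈ Finset.univ.erase i, (b j : Z)) * W i * P i).map f
      = ∑ i, C (f r) * (c i * (P i).map f) := by
        rw [Polynomial.map_sum]
        refine Finset.sum_congr rfl fun i _ => ?_
        rw [Polynomial.map_mul, Polynomial.map_mul, Polynomial.map_C, hb i, hsm i]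
        rw [hr, ← Finset.prod_erase_mul Finset.univ _ (Finset.mem_univ i), map_mul, C_mul]
        ring
    _ = C (f r) := by rw [← Finset.mul_sum, hc, mul_one]
    _ = (C r).map f := by rw [Polynomial.map_C]

theorem coprime_schinzel_dedekind
    (Z : Type*) [CommRing Z] [IsDomain Z] [IsDedekindDomain Z]
    (ℓ : ℕ) (hℓ : 2 ≤ ℓ)
    (P : Fin ℓ → Polynomial Z)
    (hne : ∀ i, P i ≠ 0)
    (hcop : ∀ d : Polynomial (FractionRing Z),
      (∀ i, d ∣ (P i).map (algebraMap Z (FractionRing Z))) → IsUnit d)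
    (hAV : ∀ a : Z, (∀ z : Z, ∀ i, a ∣ (P i).eval z) → IsUnit a) :
    ∃ m : Z, ∀ d : Z, (∀ i, d ∣ (P i).eval m) → IsUnit d := by
  classical
  obtain ⟨V, r, hrne, hbez⟩ := aux_bezout Z ℓ P hcop
  -- evaluation identity
  have heval : ∀ z : Z, ∑ i, (V i).eval z * (P i).eval z = r := by
    intro z
    have := congrArg (Polynomial.eval z) hbez
    simpa [Polynomial.eval_finset_sum] using this
  have hval : ∀ (z : Z) (J : Ideal Z), (∀ i, (P i).eval z ∈ J) → r ∈ J := by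
    intro z J hJ
    rw [← heval z]
    exact Ideal.sum_mem J fun i _ => J.mul_mem_left _ (hJ i)
  -- the finite set of primes containing r
  set S : Set (Ideal Z) := {𝔭 | 𝔭.IsMaximal ∧ r ∈ 𝔭} with hS
  have hbotS : ∀ 𝔭 ∈ S, 𝔭 ≠ ⊥ := by
    rintro 𝔭 ⟨h1, h2⟩ rfl
    exact hrne (by simpa using h2)
  have hSfin : S.Finite := by
    have hsub : S ⊆ (fun v : IsDedekindDomain.HeightOneSpectrum Z => v.asIdeal) ''
        {v | v.asIdeal ∣ Ideal.span {r}} := by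
      rintro 𝔭 h𝔭
      refine ⟨⟨𝔭, h𝔭.1.isPrime, hbotS 𝔭 h𝔭⟩, ?_, rfl⟩
      rw [Set.mem_setOf_eq, Ideal.dvd_iff_le, Ideal.span_le]
      simpa using h𝔭.2
    exact ((Ideal.finite_factors (by simpa using hrne)).image _).subset hsub
  set s : Finset (Ideal Z) := hSfin.toFinset with hs
  have hmem_s : ∀ {𝔭 : Ideal Z}, 𝔭 ∈ s ↔ (𝔭.IsMaximal ∧ r ∈ 𝔭) := by
    intro 𝔭; rw [hs, Set.Finite.mem_toFinset]; rfl
  -- choose minimal exponents and witnesses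
  have hE : ∀ 𝔭 ∈ s, ∃ (e : ℕ) (z : Z) (i₀ : Fin ℓ), (P i₀).eval z ∉ 𝔭 ^ (e + 1) ∧
      ∀ (w : Z) (i : Fin ℓ), (P i).eval w ∈ 𝔭 ^ e := by
    intro 𝔭 h𝔭
    exact aux_min_exponent Z ℓ P r hrne hval 𝔭 (hmem_s.mp h𝔭).1
  choose e zz ii h1 h2 using hE
  -- CRT
  obtain ⟨m, hm⟩ := IsDedekindDomain.exists_forall_sub_mem_ideal (s := s)
    (fun 𝔭 => 𝔭) (fun 𝔭 => if h : 𝔭 ∈ s then e 𝔭 h + 1 else 0)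
    (fun 𝔭 h𝔭 => Ideal.prime_of_isPrime (hbotS 𝔭 (hmem_s.mp h𝔭)) (hmem_s.mp h𝔭).1.isPrime)
    (fun i _ j _ hij => hij)
    (fun p => zz p.1 p.2)
  have hm' : ∀ (𝔭 : Ideal Z) (h𝔭 : 𝔭 ∈ s), m - zz 𝔭 h𝔭 ∈ 𝔭 ^ (e 𝔭 h𝔭 + 1) := by
    intro 𝔭 h𝔭
    have := hm 𝔭 h𝔭
    rwa [dif_pos h𝔭] at this
  -- key non-membership at m
  have hkey : ∀ (𝔭 : Ideal Z) (h𝔭 : 𝔭 ∈ s), (P (ii 𝔭 h𝔭)).eval m ∉ 𝔭 ^ (e 𝔭 h𝔭 + 1) := by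
    intro 𝔭 h𝔭 hmm
    apply h1 𝔭 h𝔭
    have hdvd : (m - zz 𝔭 h𝔭) ∣ ((P (ii 𝔭 h𝔭)).eval m - (P (ii 𝔭 h𝔭)).eval (zz 𝔭 h𝔭)) :=
      Polynomial.sub_dvd_eval_sub m (zz 𝔭 h𝔭) (P (ii 𝔭 h𝔭))
    obtain ⟨c, hc⟩ := hdvd
    have hdiff : (P (ii 𝔭 h𝔭)).eval m - (P (ii 𝔭 h𝔭)).eval (zz 𝔭 h𝔭) ∈ 𝔭 ^ (e 𝔭 h𝔭 + 1) := by
      rw [hc]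
      exact Ideal.mul_mem_right c _ (hm' 𝔭 h𝔭)
    have := Submodule.sub_mem _ hmm hdiff
    simpa using this
  refine ⟨m, ?_⟩
  intro d hd
  -- d ∣ r
  have hdr : d ∣ r := by
    rw [← heval m]
    exact Finset.dvd_sum fun i _ => Dvd.dvd.mul_left (hd i) _
  have hdne : d ≠ 0 := by
    rintro rfl
    rw [zero_dvd_iff] at hdr
    exact hrne hdr
  apply hAV
  intro w j
  rcases eq_or_ne ((P j).eval w) 0 with h0 | hx
  · rw [h0]; exact dvd_zero d
  apply aux_dvd_of_pow_mem Z d _ hdne hx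
  intro q hqprime n hdmem
  rcases Nat.eq_zero_or_pos n with hn0 | hnpos
  · rw [hn0, pow_zero, Ideal.one_eq_top]; exact Submodule.mem_top
  have hdq : d ∈ q := by
    have : q ^ n ≤ q ^ 1 := Ideal.pow_le_pow_right hnpos
    rw [pow_one] at this
    exact this hdmem
  have hqbot : q ≠ ⊥ := by
    simpa using hqprime.ne_zero
  have hqmax : q.IsMaximal := (Ideal.isPrime_of_prime hqprime).isMaximal hqbot
  have hrq : r ∈ q := by
    obtain ⟨c, hc⟩ := hdr
    rw [hc]
    exact Ideal.mul_mem_right c q hdq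
  have hqs : q ∈ s := hmem_s.mpr ⟨hqmax, hrq⟩
  -- n ≤ e q
  have hle : n ≤ e q hqs := by
    by_contra hlt
    push_neg at hlt
    apply hkey q hqs
    obtain ⟨c, hc⟩ := hd (ii q hqs)
    rw [hc]
    have hq1 : q ^ n ≤ q ^ (e q hqs + 1) := Ideal.pow_le_pow_right hlt
    exact Ideal.mul_mem_right c _ (hq1 hdmem)
  exact Ideal.pow_le_pow_right hle (h2 q hqs w j)
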